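/- Let l ≥ 1 and let n_1,...,n_l > 1 be integers with n = n_1 + ⋯ + n_l. Then ϑ(n) ≤ (ϑ(n_1)⁻¹ + ⋯ + ϑ(n_l)⁻¹)⁻¹. -/

import Mathlib

noncomputable def theta (n : ℕ) : ℝ :=
  (1 / 2) * (((n / 2 : ℕ) : ℝ)⁻¹ + (((n + 1) / 2 : ℕ) : ℝ)⁻¹)

lemma theta_pos {n : ℕ} (hn : 2 ≤ n) : 0 < theta n := by
  have h1 : (0:ℝ) < ((n / 2 : ℕ) : ℝ) := by
    exact_mod_cast Nat.div_pos hn (by norm_num)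
  have h2 : (0:ℝ) < (((n + 1) / 2 : ℕ) : ℝ) := by
    exact_mod_cast Nat.div_pos (by omega) (by norm_num)
  unfold theta
  positivity

lemma theta_inv_even {n : ℕ} (hn : 2 ≤ n) (h : Even n) : (theta n)⁻¹ = (n:ℝ) / 2 := by
  obtain ⟨k, hk⟩ := h
  have hk1 : 1 ≤ k := by omega
  have h1 : n / 2 = k := by omega
  have h2 : (n + 1) / 2 = k := by omega
  have hk0 : (k:ℝ) ≠ 0 := by positivity
  unfold theta
  rw [h1, h2, hk]
  push_cast
  field_simp
  norm_num

lemma theta_inv_odd {n : ℕ} (hn : 2 ≤ n) (h : Odd n) :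
    (theta n)⁻¹ = (n:ℝ) / 2 - 1 / (2 * n) := by
  obtain ⟨k, hk⟩ := h
  have hk1 : 1 ≤ k := by omega
  have h1 : n / 2 = k := by omega
  have h2 : (n + 1) / 2 = k + 1 := by omega
  have hk0 : (k:ℝ) ≠ 0 := by positivity
  have hk0' : (k:ℝ) + 1 ≠ 0 := by positivity
  have hn0 : (2:ℝ) * k + 1 ≠ 0 := by positivity
  unfold theta
  rw [h1, h2, hk]
  push_cast
  rw [show (1:ℝ)/2 * ((k:ℝ)⁻¹ + ((k:ℝ)+1)⁻¹) = ((2*(k:ℝ)*((k:ℝ)+1))/(2*(k:ℝ)+1))⁻¹ by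
    rw [eq_comm, inv_eq_iff_eq_inv, eq_comm]
    field_simp
    ring]
  rw [inv_inv]
  field_simp
  ring

lemma theta_inv_le {n : ℕ} (hn : 2 ≤ n) : (theta n)⁻¹ ≤ (n:ℝ) / 2 := by
  rcases Nat.even_or_odd n with h | h
  · rw [theta_inv_even hn h]
  · rw [theta_inv_odd hn h]
    have : (0:ℝ) < 2 * n := by positivity
    have : (0:ℝ) ≤ 1 / (2 * (n:ℝ)) := by positivity
    linarith

theorem stmt_4 (l : ℕ) (hl : 1 ≤ l) (m : Fin l → ℕ) (hm : ∀ j, 1 < m j) :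
    theta (∑ j, m j) ≤ (∑ j, (theta (m j))⁻¹)⁻¹ := by
  have hj0 : (⟨0, hl⟩ : Fin l) ∈ Finset.univ := Finset.mem_univ _
  have hn2 : 2 ≤ ∑ j, m j := by
    calc 2 ≤ m ⟨0, hl⟩ := hm _
    _ ≤ ∑ j, m j := Finset.single_le_sum (fun j _ => Nat.zero_le _) hj0
  have hpos : ∀ j, 0 < theta (m j) := fun j => theta_pos (hm j)
  have hSpos : 0 < ∑ j, (theta (m j))⁻¹ :=
    Finset.sum_pos (fun j _ => inv_pos.2 (hpos j)) ⟨_, hj0⟩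
  have hT : 0 < theta (∑ j, m j) := theta_pos hn2
  rw [le_inv_comm₀ hT hSpos]
  -- goal: ∑ j, (theta (m j))⁻¹ ≤ (theta (∑ j, m j))⁻¹
  have hsum_cast : ∑ j, ((m j : ℝ)) = ((∑ j, m j : ℕ) : ℝ) := by push_cast; rfl
  rcases Nat.even_or_odd (∑ j, m j) with h | h
  · rw [theta_inv_even hn2 h]
    calc ∑ j, (theta (m j))⁻¹ ≤ ∑ j, (m j : ℝ) / 2 :=
          Finset.sum_le_sum (fun j _ => theta_inv_le (hm j))
      _ = ((∑ j, m j : ℕ) : ℝ) / 2 := by rw [← Finset.sum_div, hsum_cast]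
  · -- some m j is odd
    have hex : ∃ j, Odd (m j) := by
      by_contra hc
      push_neg at hc
      simp only [Nat.not_odd_iff_even] at hc
      exact (Nat.not_even_iff_odd.mpr h) (Finset.even_sum _ (fun j _ => hc j))
    obtain ⟨j₀, hj₀⟩ := hex
    have hle : m j₀ ≤ ∑ j, m j := Finset.single_le_sum (fun j _ => Nat.zero_le _) (Finset.mem_univ j₀)
    have hm0 : (0:ℝ) < m j₀ := by exact_mod_cast Nat.lt_of_lt_of_le Nat.zero_lt_one (hm j₀).le
    have hN0 : (0:ℝ) < (∑ j, m j : ℕ) := by exact_mod_cast Nat.lt_of_lt_of_le Nat.zero_lt_two hn2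
    rw [theta_inv_odd hn2 h]
    have key : (theta (m j₀))⁻¹ ≤ (m j₀ : ℝ) / 2 - 1 / (2 * (∑ j, m j : ℕ)) := by
      rw [theta_inv_odd (hm j₀) hj₀]
      have : 1 / (2 * ((∑ j, m j : ℕ) : ℝ)) ≤ 1 / (2 * (m j₀ : ℝ)) := by
        apply one_div_le_one_div_of_le (by positivity)
        have : (m j₀ : ℝ) ≤ ((∑ j, m j : ℕ) : ℝ) := by exact_mod_cast hle
        linarith
      linarith
    have hsplit : ∑ j, (theta (m j))⁻¹ =
        (theta (m j₀))⁻¹ + ∑ j ∈ Finset.univ.erase j₀, (theta (m j))⁻¹ :=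
      (Finset.add_sum_erase _ _ (Finset.mem_univ j₀)).symm
    have hsplit2 : (m j₀ : ℝ) / 2 + ∑ j ∈ Finset.univ.erase j₀, (m j : ℝ) / 2 =
        ((∑ j, m j : ℕ) : ℝ) / 2 := by
      rw [Finset.add_sum_erase Finset.univ (fun j => (m j : ℝ) / 2) (Finset.mem_univ j₀),
        ← Finset.sum_div, hsum_cast]
    have hrest : ∑ j ∈ Finset.univ.erase j₀, (theta (m j))⁻¹ ≤
        ∑ j ∈ Finset.univ.erase j₀, (m j : ℝ) / 2 :=
      Finset.sum_le_sum (fun j _ => theta_inv_le (hm j))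
    rw [hsplit]
    linarith
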